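/- For all integers n ≥ 1 and m ≥ 1 and every real K, |g_{nm}(K) − g_n(K)| ≤ 6|K|/n, where g_n(K) = n^{−3}·log Z_n(K). (The (nm)³ periodic lattice can be changed into m³ identical disjoint periodic cubes of side n by changing at most 6(nm)³/n bond terms, each of magnitude at most |K|.) -/

import Mathlib

open scoped BigOperators

/-- The sites of the periodic `n × n × n` cubic lattice: the discrete 3-torus. -/
abbrev Site (n : ℕ) : Type := ZMod n × ZMod n × ZMod n

/-- A spin configuration: a function assigning to each site a spin in `{-1, 1} ⊆ ℤ`. -/
abbrev SpinCfg (n : ℕ) : Type := Site n → ({-1, 1} : Finset ℤ)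

/-- The bond sum `S(σ) = ∑_i ∑_{α=1}^3 σ(i)·σ(i+e_α)`, each of the `3n³`
nearest-neighbor bonds of the torus counted once. -/
def bondSum : (n : ℕ) → SpinCfg n → ℤ
  | 0, _ => 0
  | n + 1, σ =>
      ∑ i : Site (n + 1),
        ((σ i : ℤ) * (σ (i + (1, 0, 0)) : ℤ) + (σ i : ℤ) * (σ (i + (0, 1, 0)) : ℤ) +
          (σ i : ℤ) * (σ (i + (0, 0, 1)) : ℤ))

/-- The zero-field partition function `Z_n(K) = ∑_σ exp (K * S σ)`, for complex `K`. -/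
noncomputable def Zc : (n : ℕ) → ℂ → ℂ
  | 0, _ => 0
  | n + 1, K => ∑ σ : SpinCfg (n + 1), Complex.exp (K * (bondSum (n + 1) σ : ℂ))

/-- The zero-field partition function for real `K`. -/
noncomputable def Zr : (n : ℕ) → ℝ → ℝ
  | 0, _ => 0
  | n + 1, K => ∑ σ : SpinCfg (n + 1), Real.exp (K * (bondSum (n + 1) σ : ℝ))

/-- The free energy per site `g_n(K) = n⁻³ log Z_n(K)` for real `K`. -/
noncomputable def g : (n : ℕ) → ℝ → ℝ
  | 0, _ => 0
  | n + 1, K => Real.log (Zr (n + 1) K) / ((n : ℝ) + 1) ^ 3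

/-- Thermal expectation `⟨A⟩_n = Z_n(K)⁻¹ ∑_σ A σ * exp (K * S σ)`, real version. -/
noncomputable def expec : (n : ℕ) → ℝ → ((SpinCfg n) → ℝ) → ℝ
  | 0, _, _ => 0
  | n + 1, K, A =>
      (∑ σ : SpinCfg (n + 1), A σ * Real.exp (K * (bondSum (n + 1) σ : ℝ))) / Zr (n + 1) K

/-- Numerator `∑_σ (∏_{i ∈ T} σ i) exp (K * S σ)` of the correlation of the set `T` of sites. -/
noncomputable def corrNum : (n : ℕ) → Finset (Site n) → ℂ → ℂ
  | 0, _, _ => 0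
  | n + 1, T, K =>
      ∑ σ : SpinCfg (n + 1), (∏ i ∈ T, ((σ i : ℤ) : ℂ)) * Complex.exp (K * (bondSum (n + 1) σ : ℂ))

/-- The correlation function `C_{n,T}(K)` of a finite set `T` of sites. -/
noncomputable def corr (n : ℕ) (T : Finset (Site n)) (K : ℂ) : ℂ := corrNum n T K / Zc n K

namespace FEaux
variable {n m : ℕ}

lemma spin_abs {n : ℕ} (σ : SpinCfg n) (i : Site n) : |(σ i : ℤ)| = 1 := by
  have h := (σ i).2
  simp only [Finset.mem_insert, Finset.mem_singleton] at h
  rcases h with h | h <;> simp [h]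

/-- block embedding -/
def blk (n m : ℕ) (x : ZMod n) (y : Fin m) : ZMod (n * m) :=
  ((x.val + n * y.val : ℕ) : ZMod (n * m))

lemma blk_bij (hn : 0 < n) (hm : 0 < m) :
    Function.Bijective (fun p : ZMod n × Fin m => blk n m p.1 p.2) := by
  haveI : NeZero n := ⟨hn.ne'⟩
  haveI : NeZero (n * m) := ⟨(Nat.mul_pos hn hm).ne'⟩
  rw [Fintype.bijective_iff_injective_and_card]
  constructor
  · rintro ⟨x, y⟩ ⟨x', y'⟩ h
    simp only [blk] at h
    have hx := ZMod.val_lt x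
    have hx' := ZMod.val_lt x'
    have hlt : x.val + n * y.val < n * m := by
      calc x.val + n * y.val < n + n * y.val := by omega
        _ = n * (y.val + 1) := by ring
        _ ≤ n * m := Nat.mul_le_mul_left n y.2
    have hlt' : x'.val + n * y'.val < n * m := by
      calc x'.val + n * y'.val < n + n * y'.val := by omega
        _ = n * (y'.val + 1) := by ring
        _ ≤ n * m := Nat.mul_le_mul_left n y'.2
    have h2 : x.val + n * y.val = x'.val + n * y'.val := by
      have := congrArg ZMod.val h
      rwa [ZMod.val_cast_of_lt hlt, ZMod.val_cast_of_lt hlt'] at this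
    have hxv : x.val = x'.val := by
      have hm2 := congrArg (· % n) h2
      simpa [Nat.add_mul_mod_self_left, Nat.mod_eq_of_lt hx, Nat.mod_eq_of_lt hx'] using hm2
    have hyv : y.val = y'.val := by
      have hy : n * y.val = n * y'.val := by omega
      exact Nat.eq_of_mul_eq_mul_left hn hy
    exact Prod.ext (ZMod.val_injective n hxv) (Fin.ext hyv)
  · simp [ZMod.card]

lemma blk_shift (hn : 0 < n) (x : ZMod n) (y : Fin m)
    (hx : x.val + 1 < n) : blk n m (x + 1) y = blk n m x y + 1 := by
  haveI : NeZero n := ⟨hn.ne'⟩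
  have h1 : (1 : ZMod n).val = 1 := by
    rw [ZMod.val_one_eq_one_mod, Nat.mod_eq_of_lt (by omega)]
  have hadd : (x + 1).val = x.val + 1 := by
    rw [ZMod.val_add_of_lt (by omega), h1]
  simp only [blk, hadd]
  push_cast
  ring

/-- the blocks -/
abbrev Blocks (m : ℕ) : Type := Fin m × Fin m × Fin m

def siteMap (n m : ℕ) (a : Site n) (b : Blocks m) : Site (n * m) :=
  (blk n m a.1 b.1, blk n m a.2.1 b.2.1, blk n m a.2.2 b.2.2)

def regroup : Site n × Blocks m ≃ (ZMod n × Fin m) × (ZMod n × Fin m) × (ZMod n × Fin m) where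
  toFun p := ((p.1.1, p.2.1), (p.1.2.1, p.2.2.1), (p.1.2.2, p.2.2.2))
  invFun q := ((q.1.1, q.2.1.1, q.2.2.1), (q.1.2, q.2.1.2, q.2.2.2))
  left_inv p := rfl
  right_inv q := rfl

noncomputable def siteEquiv (hn : 0 < n) (hm : 0 < m) : Site n × Blocks m ≃ Site (n * m) :=
  regroup.trans
    (Equiv.prodCongr (Equiv.ofBijective _ (blk_bij hn hm))
      (Equiv.prodCongr (Equiv.ofBijective _ (blk_bij hn hm))
        (Equiv.ofBijective _ (blk_bij hn hm))))

lemma siteEquiv_apply (hn : 0 < n) (hm : 0 < m) (a : Site n) (b : Blocks m) :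
    siteEquiv hn hm (a, b) = siteMap n m a b := rfl

lemma siteMap_bij (hn : 0 < n) (hm : 0 < m) :
    Function.Bijective (fun p : Site n × Blocks m => siteMap n m p.1 p.2) :=
  (siteEquiv hn hm).bijective

/-- restriction of a configuration to a block -/
def res (n m : ℕ) (σ : SpinCfg (n * m)) (b : Blocks m) : SpinCfg n :=
  fun a => σ (siteMap n m a b)

noncomputable def glue (hn : 0 < n) (hm : 0 < m) (f : Blocks m → SpinCfg n) :
    SpinCfg (n * m) :=
  fun i => f ((siteEquiv hn hm).symm i).2 ((siteEquiv hn hm).symm i).1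

lemma glue_res (hn : 0 < n) (hm : 0 < m) (f : Blocks m → SpinCfg n) (b : Blocks m) :
    res n m (glue hn hm f) b = f b := by
  funext a
  have h : (siteEquiv hn hm).symm (siteMap n m a b) = (a, b) := by
    rw [← siteEquiv_apply hn hm]; exact Equiv.symm_apply_apply _ _
  simp [res, glue, h]

lemma glue_bij (hn : 0 < n) (hm : 0 < m) : Function.Bijective (glue hn hm) := by
  constructor
  · intro f f' h
    funext b a
    have := congrFun (congrFun (congrArg (res n m) h) b) a
    rwa [glue_res, glue_res] at this
  · intro σ
    refine ⟨fun b a => σ (siteMap n m a b), funext fun i => ?_⟩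
    show σ (siteMap n m ((siteEquiv hn hm).symm i).1 ((siteEquiv hn hm).symm i).2) = σ i
    congr 1
    rw [← siteEquiv_apply hn hm]
    exact (siteEquiv hn hm).apply_symm_apply i

end FEaux

namespace FEaux
variable {n m : ℕ}

lemma bondSum_eq [NeZero n] (σ : SpinCfg n) :
    bondSum n σ = ∑ i : Site n,
        ((σ i : ℤ) * (σ (i + (1, 0, 0)) : ℤ) + (σ i : ℤ) * (σ (i + (0, 1, 0)) : ℤ) +
          (σ i : ℤ) * (σ (i + (0, 0, 1)) : ℤ)) := by
  cases n with
  | zero => exact absurd rfl (NeZero.ne 0)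
  | succ k => rfl

/-- penalty function: 2 on the last layer of a block, 0 elsewhere -/
def pen (n : ℕ) (x : ZMod n) : ℤ := if x.val + 1 < n then 0 else 2

lemma pen_sum [NeZero n] : ∑ x : ZMod n, pen n x = 2 := by
  have hn : 0 < n := Nat.pos_of_ne_zero (NeZero.ne n)
  have h : ∀ x : ZMod n, pen n x = if x = ((n - 1 : ℕ) : ZMod n) then 2 else 0 := by
    intro x
    have hx := ZMod.val_lt x
    have hv : (((n - 1 : ℕ) : ZMod n)).val = n - 1 := ZMod.val_cast_of_lt (by omega)
    by_cases hc : x.val + 1 < n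
    · have : x ≠ ((n - 1 : ℕ) : ZMod n) := by
        intro he; rw [he, hv] at hc; omega
      simp [pen, hc, this]
    · have : x = ((n - 1 : ℕ) : ZMod n) := by
        apply ZMod.val_injective
        rw [hv]; omega
      rw [this, if_pos rfl]
      unfold pen
      rw [hv, if_neg (by omega)]
  rw [Finset.sum_congr rfl fun x _ => h x]
  simp

lemma diff_bound {u v w : ℤ} (hu : |u| = 1) (hv : |v| = 1) (hw : |w| = 1) :
    |u * v - u * w| ≤ 2 := by
  calc |u * v - u * w| ≤ |u * v| + |u * w| := abs_sub _ _
    _ = 2 := by rw [abs_mul, abs_mul, hu, hv, hw]; ring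

lemma abs_sub3 {a1 a2 a3 b1 b2 b3 c1 c2 c3 : ℤ} (h1 : |a1 - b1| ≤ c1)
    (h2 : |a2 - b2| ≤ c2) (h3 : |a3 - b3| ≤ c3) :
    |(a1 + a2 + a3) - (b1 + b2 + b3)| ≤ c1 + c2 + c3 := by
  have he : (a1 + a2 + a3) - (b1 + b2 + b3) = (a1 - b1) + (a2 - b2) + (a3 - b3) := by ring
  rw [he]
  calc |(a1 - b1) + (a2 - b2) + (a3 - b3)| ≤ |(a1 - b1) + (a2 - b2)| + |a3 - b3| := abs_add_le _ _
    _ ≤ |a1 - b1| + |a2 - b2| + |a3 - b3| := by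
        have := abs_add_le (a1 - b1) (a2 - b2)
        omega
    _ ≤ c1 + c2 + c3 := by omega

lemma term_bound (hn : 0 < n) (hm : 0 < m) (σ : SpinCfg (n * m)) (a : Site n)
    (b : Blocks m) :
    |((σ (siteMap n m a b) : ℤ) * (σ (siteMap n m a b + (1, 0, 0)) : ℤ) +
        (σ (siteMap n m a b) : ℤ) * (σ (siteMap n m a b + (0, 1, 0)) : ℤ) +
        (σ (siteMap n m a b) : ℤ) * (σ (siteMap n m a b + (0, 0, 1)) : ℤ)) -
      ((res n m σ b a : ℤ) * (res n m σ b (a + (1, 0, 0)) : ℤ) +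
        (res n m σ b a : ℤ) * (res n m σ b (a + (0, 1, 0)) : ℤ) +
        (res n m σ b a : ℤ) * (res n m σ b (a + (0, 0, 1)) : ℤ))|
      ≤ pen n a.1 + pen n a.2.1 + pen n a.2.2 := by
  obtain ⟨a1, a2, a3⟩ := a
  obtain ⟨b1, b2, b3⟩ := b
  simp only [res]
  set P : Site (n * m) := siteMap n m (a1, a2, a3) (b1, b2, b3) with hP
  have e1 : siteMap n m ((a1, a2, a3) + (1, 0, 0)) (b1, b2, b3) =
      (blk n m (a1 + 1) b1, blk n m a2 b2, blk n m a3 b3) := by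
    simp [siteMap, Prod.add_def]
  have e2 : siteMap n m ((a1, a2, a3) + (0, 1, 0)) (b1, b2, b3) =
      (blk n m a1 b1, blk n m (a2 + 1) b2, blk n m a3 b3) := by
    simp [siteMap, Prod.add_def]
  have e3 : siteMap n m ((a1, a2, a3) + (0, 0, 1)) (b1, b2, b3) =
      (blk n m a1 b1, blk n m a2 b2, blk n m (a3 + 1) b3) := by
    simp [siteMap, Prod.add_def]
  have hPadd1 : P + (1, 0, 0) = (blk n m a1 b1 + 1, blk n m a2 b2, blk n m a3 b3) := by
    simp [hP, siteMap, Prod.add_def]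
  have hPadd2 : P + (0, 1, 0) = (blk n m a1 b1, blk n m a2 b2 + 1, blk n m a3 b3) := by
    simp [hP, siteMap, Prod.add_def]
  have hPadd3 : P + (0, 0, 1) = (blk n m a1 b1, blk n m a2 b2, blk n m a3 b3 + 1) := by
    simp [hP, siteMap, Prod.add_def]
  have t1 : |(σ P : ℤ) * (σ (P + (1, 0, 0)) : ℤ) -
      (σ P : ℤ) * (σ (siteMap n m ((a1, a2, a3) + (1, 0, 0)) (b1, b2, b3)) : ℤ)| ≤ pen n a1 := by
    by_cases hc : a1.val + 1 < n
    · have : siteMap n m ((a1, a2, a3) + (1, 0, 0)) (b1, b2, b3) = P + (1, 0, 0) := by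
        rw [e1, hPadd1, blk_shift hn a1 b1 hc]
      rw [this]
      simp [pen, hc]
    · rw [show pen n a1 = 2 by simp [pen, hc]]
      exact diff_bound (spin_abs σ P) (spin_abs σ _) (spin_abs σ _)
  have t2 : |(σ P : ℤ) * (σ (P + (0, 1, 0)) : ℤ) -
      (σ P : ℤ) * (σ (siteMap n m ((a1, a2, a3) + (0, 1, 0)) (b1, b2, b3)) : ℤ)| ≤ pen n a2 := by
    by_cases hc : a2.val + 1 < n
    · have : siteMap n m ((a1, a2, a3) + (0, 1, 0)) (b1, b2, b3) = P + (0, 1, 0) := by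
        rw [e2, hPadd2, blk_shift hn a2 b2 hc]
      rw [this]
      simp [pen, hc]
    · rw [show pen n a2 = 2 by simp [pen, hc]]
      exact diff_bound (spin_abs σ P) (spin_abs σ _) (spin_abs σ _)
  have t3 : |(σ P : ℤ) * (σ (P + (0, 0, 1)) : ℤ) -
      (σ P : ℤ) * (σ (siteMap n m ((a1, a2, a3) + (0, 0, 1)) (b1, b2, b3)) : ℤ)| ≤ pen n a3 := by
    by_cases hc : a3.val + 1 < n
    · have : siteMap n m ((a1, a2, a3) + (0, 0, 1)) (b1, b2, b3) = P + (0, 0, 1) := by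
        rw [e3, hPadd3, blk_shift hn a3 b3 hc]
      rw [this]
      simp [pen, hc]
    · rw [show pen n a3 = 2 by simp [pen, hc]]
      exact diff_bound (spin_abs σ P) (spin_abs σ _) (spin_abs σ _)
  exact abs_sub3 t1 t2 t3

end FEaux

namespace FEaux
variable {n m : ℕ}

lemma pen_site_sum [NeZero n] :
    ∑ a : Site n, (pen n a.1 + pen n a.2.1 + pen n a.2.2) = 6 * (n : ℤ) ^ 2 := by
  simp only [Fintype.sum_prod_type, Finset.sum_add_distrib, Finset.sum_const,
    Finset.card_univ, ZMod.card, Fintype.card_prod, smul_eq_mul, nsmul_eq_mul,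
    ← Finset.sum_mul, ← Finset.mul_sum, pen_sum]
  push_cast
  ring

set_option maxHeartbeats 1000000 in
lemma bond_decomp (hn : 0 < n) (hm : 0 < m) (σ : SpinCfg (n * m)) :
    |bondSum (n * m) σ - ∑ b : Blocks m, bondSum n (res n m σ b)| ≤
      6 * (n : ℤ) ^ 2 * (m : ℤ) ^ 3 := by
  haveI : NeZero n := ⟨hn.ne'⟩
  haveI : NeZero (n * m) := ⟨(Nat.mul_pos hn hm).ne'⟩
  have h1 : bondSum (n * m) σ = ∑ p : Site n × Blocks m,
      ((σ (siteMap n m p.1 p.2) : ℤ) * (σ (siteMap n m p.1 p.2 + (1, 0, 0)) : ℤ) +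
        (σ (siteMap n m p.1 p.2) : ℤ) * (σ (siteMap n m p.1 p.2 + (0, 1, 0)) : ℤ) +
        (σ (siteMap n m p.1 p.2) : ℤ) * (σ (siteMap n m p.1 p.2 + (0, 0, 1)) : ℤ)) := by
    rw [bondSum_eq σ]
    exact (Fintype.sum_bijective _ (siteMap_bij hn hm) _ _ (fun p => rfl)).symm
  have h2 : ∑ b : Blocks m, bondSum n (res n m σ b) = ∑ p : Site n × Blocks m,
      ((res n m σ p.2 p.1 : ℤ) * (res n m σ p.2 (p.1 + (1, 0, 0)) : ℤ) +
        (res n m σ p.2 p.1 : ℤ) * (res n m σ p.2 (p.1 + (0, 1, 0)) : ℤ) +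
        (res n m σ p.2 p.1 : ℤ) * (res n m σ p.2 (p.1 + (0, 0, 1)) : ℤ)) := by
    calc ∑ b : Blocks m, bondSum n (res n m σ b)
        = ∑ b : Blocks m, ∑ a : Site n,
            ((res n m σ b a : ℤ) * (res n m σ b (a + (1, 0, 0)) : ℤ) +
              (res n m σ b a : ℤ) * (res n m σ b (a + (0, 1, 0)) : ℤ) +
              (res n m σ b a : ℤ) * (res n m σ b (a + (0, 0, 1)) : ℤ)) :=
          Finset.sum_congr rfl fun b _ => bondSum_eq (res n m σ b)
      _ = _ := (Fintype.sum_prod_type_right (fun p : Site n × Blocks m =>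
            ((res n m σ p.2 p.1 : ℤ) * (res n m σ p.2 (p.1 + (1, 0, 0)) : ℤ) +
              (res n m σ p.2 p.1 : ℤ) * (res n m σ p.2 (p.1 + (0, 1, 0)) : ℤ) +
              (res n m σ p.2 p.1 : ℤ) * (res n m σ p.2 (p.1 + (0, 0, 1)) : ℤ)))).symm
  rw [h1, h2, ← Finset.sum_sub_distrib]
  calc |∑ p : Site n × Blocks m, _| ≤ ∑ p : Site n × Blocks m,
        (pen n p.1.1 + pen n p.1.2.1 + pen n p.1.2.2) := by
        refine (Finset.abs_sum_le_sum_abs _ _).trans (Finset.sum_le_sum fun p _ => ?_)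
        exact term_bound hn hm σ p.1 p.2
    _ = ∑ _b : Blocks m, (6 * (n : ℤ) ^ 2) :=
          (Fintype.sum_prod_type_right _).trans (Finset.sum_congr rfl fun b _ => pen_site_sum)
    _ = 6 * (n : ℤ) ^ 2 * (m : ℤ) ^ 3 := by
        simp only [Finset.sum_const, Finset.card_univ, Fintype.card_prod, Fintype.card_fin,
          smul_eq_mul]
        push_cast
        ring

end FEaux

namespace FEaux
variable {n m : ℕ}

lemma Zr_eq [NeZero n] (K : ℝ) :
    Zr n K = ∑ σ : SpinCfg n, Real.exp (K * (bondSum n σ : ℝ)) := by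
  cases n with
  | zero => exact absurd rfl (NeZero.ne 0)
  | succ k => rfl

lemma Zr_pos [NeZero n] (K : ℝ) : 0 < Zr n K := by
  rw [Zr_eq]
  haveI : Nonempty (SpinCfg n) := ⟨fun _ => ⟨1, by decide⟩⟩
  exact Finset.sum_pos (fun σ _ => Real.exp_pos _) Finset.univ_nonempty

lemma g_eq [NeZero n] (K : ℝ) : g n K = Real.log (Zr n K) / (n : ℝ) ^ 3 := by
  cases n with
  | zero => exact absurd rfl (NeZero.ne 0)
  | succ k =>
    show Real.log (Zr (k + 1) K) / ((k : ℝ) + 1) ^ 3 = _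
    push_cast
    rfl

set_option maxHeartbeats 1000000 in
lemma Zprime [NeZero (n * m)] (hn : 0 < n) (hm : 0 < m) (K : ℝ) :
    ∑ σ : SpinCfg (n * m),
        Real.exp (K * ((∑ b : Blocks m, bondSum n (res n m σ b) : ℤ) : ℝ)) =
      (Zr n K) ^ (m ^ 3) := by
  haveI : NeZero n := ⟨hn.ne'⟩
  haveI : NeZero (n * m) := ⟨(Nat.mul_pos hn hm).ne'⟩
  calc ∑ σ : SpinCfg (n * m),
          Real.exp (K * ((∑ b : Blocks m, bondSum n (res n m σ b) : ℤ) : ℝ))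
      = ∑ f : Blocks m → SpinCfg n,
          Real.exp (K * ((∑ b : Blocks m, bondSum n (res n m (glue hn hm f) b) : ℤ) : ℝ)) :=
        (Fintype.sum_bijective (glue hn hm) (glue_bij hn hm) _ _ (fun f => rfl)).symm
    _ = ∑ f : Blocks m → SpinCfg n, ∏ b : Blocks m, Real.exp (K * (bondSum n (f b) : ℝ)) := by
        refine Finset.sum_congr rfl fun f _ => ?_
        have hres : ∀ b, res n m (glue hn hm f) b = f b := glue_res hn hm f
        simp only [hres]
        push_cast
        rw [Finset.mul_sum, Real.exp_sum]
    _ = ∏ _b : Blocks m, ∑ τ : SpinCfg n, Real.exp (K * (bondSum n τ : ℝ)) :=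
        (Fintype.prod_sum (fun (_b : Blocks m) (τ : SpinCfg n) =>
          Real.exp (K * (bondSum n τ : ℝ)))).symm
    _ = (Zr n K) ^ (m ^ 3) := by
        rw [Finset.prod_const, ← Zr_eq, Finset.card_univ]
        congr 1
        simp [Fintype.card_prod, Fintype.card_fin]
        ring

lemma Z_compare (hn : 0 < n) (hm : 0 < m) (K : ℝ) :
    Real.exp (-(6 * |K| * (n : ℝ) ^ 2 * (m : ℝ) ^ 3)) * (Zr n K) ^ (m ^ 3) ≤ Zr (n * m) K ∧
      Zr (n * m) K ≤ Real.exp (6 * |K| * (n : ℝ) ^ 2 * (m : ℝ) ^ 3) * (Zr n K) ^ (m ^ 3) := by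
  haveI : NeZero n := ⟨hn.ne'⟩
  haveI : NeZero (n * m) := ⟨(Nat.mul_pos hn hm).ne'⟩
  set C : ℝ := 6 * |K| * (n : ℝ) ^ 2 * (m : ℝ) ^ 3 with hC
  have hbound : ∀ σ : SpinCfg (n * m),
      |K * (bondSum (n * m) σ : ℝ) -
        K * ((∑ b : Blocks m, bondSum n (res n m σ b) : ℤ) : ℝ)| ≤ C := by
    intro σ
    have hb := bond_decomp hn hm σ
    have hb' : |(bondSum (n * m) σ : ℝ) - ((∑ b : Blocks m, bondSum n (res n m σ b) : ℤ) : ℝ)|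
        ≤ 6 * (n : ℝ) ^ 2 * (m : ℝ) ^ 3 := by
      exact_mod_cast hb
    calc |K * (bondSum (n * m) σ : ℝ) -
          K * ((∑ b : Blocks m, bondSum n (res n m σ b) : ℤ) : ℝ)|
        = |K| * |(bondSum (n * m) σ : ℝ) -
            ((∑ b : Blocks m, bondSum n (res n m σ b) : ℤ) : ℝ)| := by
          rw [← mul_sub, abs_mul]
      _ ≤ |K| * (6 * (n : ℝ) ^ 2 * (m : ℝ) ^ 3) :=
          mul_le_mul_of_nonneg_left hb' (abs_nonneg K)
      _ = C := by rw [hC]; ring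
  constructor
  · rw [← Zprime hn hm K, Zr_eq (n := n * m), Finset.mul_sum]
    refine Finset.sum_le_sum fun σ _ => ?_
    have h := abs_le.1 (hbound σ)
    calc Real.exp (-C) * Real.exp (K * ((∑ b : Blocks m, bondSum n (res n m σ b) : ℤ) : ℝ))
        = Real.exp (-C + K * ((∑ b : Blocks m, bondSum n (res n m σ b) : ℤ) : ℝ)) :=
          (Real.exp_add _ _).symm
      _ ≤ Real.exp (K * (bondSum (n * m) σ : ℝ)) := Real.exp_le_exp.mpr (by linarith [h.1])
  · rw [← Zprime hn hm K, Zr_eq (n := n * m), Finset.mul_sum]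
    refine Finset.sum_le_sum fun σ _ => ?_
    have h := abs_le.1 (hbound σ)
    calc Real.exp (K * (bondSum (n * m) σ : ℝ))
        ≤ Real.exp (C + K * ((∑ b : Blocks m, bondSum n (res n m σ b) : ℤ) : ℝ)) :=
          Real.exp_le_exp.mpr (by linarith [h.2])
      _ = Real.exp C * Real.exp (K * ((∑ b : Blocks m, bondSum n (res n m σ b) : ℤ) : ℝ)) :=
          Real.exp_add _ _

end FEaux


/-- for all `n, m ≥ 1` and real `K`,
`|g_{nm}(K) − g_n(K)| ≤ 6|K|/n`, where `g_n(K) = n⁻³ log Z_n(K)`. -/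
theorem freeEnergy_cube_compare (n m : ℕ) (hn : 1 ≤ n) (hm : 1 ≤ m) (K : ℝ) :
    |g (n * m) K - g n K| ≤ 6 * |K| / (n : ℝ) := by
  haveI : NeZero n := ⟨by omega⟩
  haveI : NeZero (n * m) := ⟨by positivity⟩
  obtain ⟨hlo, hup⟩ := FEaux.Z_compare hn hm K
  set C : ℝ := 6 * |K| * (n : ℝ) ^ 2 * (m : ℝ) ^ 3 with hC
  have hZn := FEaux.Zr_pos (n := n) K
  have hZN := FEaux.Zr_pos (n := n * m) K
  have hpow : (0 : ℝ) < (Zr n K) ^ (m ^ 3) := pow_pos hZn _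
  have hx : Real.log (Zr (n * m) K) ≤ C + (m : ℝ) ^ 3 * Real.log (Zr n K) := by
    have h := (Real.log_le_log_iff hZN (by positivity)).2 hup
    rw [Real.log_mul (Real.exp_ne_zero _) (ne_of_gt hpow), Real.log_exp, Real.log_pow] at h
    push_cast at h
    linarith
  have hy : -C + (m : ℝ) ^ 3 * Real.log (Zr n K) ≤ Real.log (Zr (n * m) K) := by
    have h := (Real.log_le_log_iff (by positivity) hZN).2 hlo
    rw [Real.log_mul (Real.exp_ne_zero _) (ne_of_gt hpow), Real.log_exp, Real.log_pow] at h
    push_cast at h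
    linarith
  have key : |Real.log (Zr (n * m) K) - (m : ℝ) ^ 3 * Real.log (Zr n K)| ≤ C :=
    abs_le.2 ⟨by linarith, by linarith⟩
  have hn0 : (n : ℝ) ≠ 0 := by positivity
  have hm0 : (m : ℝ) ≠ 0 := by positivity
  have hcast : ((n * m : ℕ) : ℝ) = (n : ℝ) * (m : ℝ) := by push_cast; ring
  rw [FEaux.g_eq, FEaux.g_eq]
  have hre : Real.log (Zr (n * m) K) / ((n * m : ℕ) : ℝ) ^ 3 -
      Real.log (Zr n K) / (n : ℝ) ^ 3 =
      (Real.log (Zr (n * m) K) - (m : ℝ) ^ 3 * Real.log (Zr n K)) /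
        ((n : ℝ) ^ 3 * (m : ℝ) ^ 3) := by
    rw [hcast]
    field_simp
  have hfinal : 6 * |K| / (n : ℝ) = C / ((n : ℝ) ^ 3 * (m : ℝ) ^ 3) := by
    rw [hC]
    field_simp
  rw [hre, abs_div, abs_of_pos (show (0:ℝ) < (n:ℝ)^3*(m:ℝ)^3 by positivity), hfinal]
  exact div_le_div_of_nonneg_right key (by positivity) |>.trans_eq rfl
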